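/- The LP dual of the fractional bin packing LP has an optimal solution π* that is monotone in the item sizes: π*_1 ≥ π*_2 ≥ ... ≥ π*_p whenever s_1 > s_2 > ... > s_p. -/
import Mathlib

/-- The dual of the fractional bin packing LP (for item sizes `s 0 > s 1 > … > s (p-1)`
in `(0,1]` with multiplicities `n j`) has an optimal solution that is monotone in the
item sizes: `π* 0 ≥ π* 1 ≥ … ≥ π* (p-1)`.  A dual solution `π` is feasible if `π ≥ 0`
and `Σ_j v_j π_j ≤ 1` for every pattern `v ∈ ℕ^p` with `Σ_j v_j s_j ≤ 1`; it is optimal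
if it maximizes `Σ_j n_j π_j` among feasible solutions. -/
theorem dual_FBP_monotone_optimal (p : ℕ) (s : Fin p → ℝ) (n : Fin p → ℕ)
    (hs : ∀ j, 0 < s j ∧ s j ≤ 1) (hanti : StrictAnti s) :
    ∃ π : Fin p → ℝ,
      (∀ j, 0 ≤ π j) ∧
      (∀ v : Fin p → ℕ, (∑ j, (v j : ℝ) * s j) ≤ 1 → (∑ j, (v j : ℝ) * π j) ≤ 1) ∧
      (∀ π' : Fin p → ℝ, (∀ j, 0 ≤ π' j) →
        (∀ v : Fin p → ℕ, (∑ j, (v j : ℝ) * s j) ≤ 1 → (∑ j, (v j : ℝ) * π' j) ≤ 1) →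
        (∑ j, (n j : ℝ) * π' j) ≤ (∑ j, (n j : ℝ) * π j)) ∧
      (∀ i j : Fin p, i ≤ j → π j ≤ π i) := by
  classical
  -- the feasible set
  set S : Set (Fin p → ℝ) := {π | (∀ j, 0 ≤ π j) ∧
      ∀ v : Fin p → ℕ, (∑ j, (v j : ℝ) * s j) ≤ 1 → (∑ j, (v j : ℝ) * π j) ≤ 1} with hS
  have hne : S.Nonempty := ⟨0, fun j => le_refl 0, fun v _ => by simp⟩
  -- bound: π j ≤ 1 for π ∈ S
  have hbdd : ∀ π ∈ S, ∀ j, π j ≤ 1 := by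
    intro π hπ j
    have := hπ.2 (fun k => if k = j then 1 else 0) ?_
    · simpa using this
    · simpa using (hs j).2
  have hsub : S ⊆ Set.Icc (0 : Fin p → ℝ) 1 := by
    intro π hπ
    exact ⟨fun j => hπ.1 j, fun j => hbdd π hπ j⟩
  have hclosed : IsClosed S := by
    have : S = (⋂ j, {π : Fin p → ℝ | 0 ≤ π j}) ∩
        ⋂ (v : Fin p → ℕ) (_ : (∑ j, (v j : ℝ) * s j) ≤ 1),
          {π : Fin p → ℝ | (∑ j, (v j : ℝ) * π j) ≤ 1} := by
      ext π; simp [hS, Set.mem_iInter, forall_and]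
    rw [this]
    refine IsClosed.inter (isClosed_iInter fun j => isClosed_le continuous_const (continuous_apply j)) ?_
    refine isClosed_iInter fun v => isClosed_iInter fun _ => ?_
    exact isClosed_le (continuous_finset_sum _ fun j _ => (continuous_const.mul (continuous_apply j))) continuous_const
  have hcomp : IsCompact S := (isCompact_Icc).of_isClosed_subset hclosed hsub
  -- max of the objective
  obtain ⟨π, hπS, hmax⟩ := hcomp.exists_isMaxOn hne
    ((continuous_finset_sum _ fun j _ => (continuous_const.mul (continuous_apply j))).continuousOn
      (f := fun π : Fin p → ℝ => ∑ j, (n j : ℝ) * π j))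
  -- monotone rearrangement
  have hargmax : ∀ j : Fin p, ∃ k : Fin p, j ≤ k ∧ ∀ m : Fin p, j ≤ m → π m ≤ π k := by
    intro j
    obtain ⟨k, hk, hmaxk⟩ := Finset.exists_max_image (Finset.univ.filter (fun m => j ≤ m)) π
      ⟨j, by simp⟩
    exact ⟨k, (Finset.mem_filter.mp hk).2, fun m hm => hmaxk m (by simp [hm])⟩
  choose kmap hkle hkmax using hargmax
  set π' : Fin p → ℝ := fun j => π (kmap j) with hπ'
  have hge : ∀ j, π j ≤ π' j := fun j => hkmax j j le_rfl
  -- key reindexing lemma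
  have key : ∀ (v : Fin p → ℕ) (f : Fin p → ℝ),
      (∑ m, ((∑ j ∈ Finset.univ.filter (fun j => kmap j = m), v j : ℕ) : ℝ) * f m)
        = ∑ j, (v j : ℝ) * f (kmap j) := by
    intro v f
    have h1 : ∀ m : Fin p, ((∑ j ∈ Finset.univ.filter (fun j => kmap j = m), v j : ℕ) : ℝ) * f m
        = ∑ j ∈ Finset.univ.filter (fun j => kmap j = m), (v j : ℝ) * f (kmap j) := by
      intro m
      rw [Nat.cast_sum, Finset.sum_mul]
      refine Finset.sum_congr rfl fun j hj => ?_
      rw [(Finset.mem_filter.mp hj).2]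
    rw [Finset.sum_congr rfl fun m _ => h1 m]
    exact Finset.sum_fiberwise _ _ _
  have hfeas' : ∀ v : Fin p → ℕ, (∑ j, (v j : ℝ) * s j) ≤ 1 → (∑ j, (v j : ℝ) * π' j) ≤ 1 := by
    intro v hv
    set v2 : Fin p → ℕ := fun m => ∑ j ∈ Finset.univ.filter (fun j => kmap j = m), v j
    have hv2 : (∑ m, (v2 m : ℝ) * s m) ≤ 1 := by
      rw [key v s]
      refine le_trans (Finset.sum_le_sum fun j _ => ?_) hv
      exact mul_le_mul_of_nonneg_left (hanti.antitone (hkle j)) (by positivity)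
    have := hπS.2 v2 hv2
    rwa [key v π] at this
  have hπ'S : π' ∈ S := ⟨fun j => hπS.1 (kmap j), hfeas'⟩
  refine ⟨π', fun j => hπS.1 (kmap j), hfeas', ?_, ?_⟩
  · intro π'' h1 h2
    have hmem : π'' ∈ S := ⟨h1, h2⟩
    refine le_trans (hmax hmem) (Finset.sum_le_sum fun j _ => ?_)
    exact mul_le_mul_of_nonneg_left (hge j) (by positivity)
  · intro i j hij
    exact hkmax i (kmap j) (le_trans hij (hkle j))
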